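/- Suppose n ≥ 2 and for each task q there is a unique dominating agent i* q, i.e., f (i* q) q > f j q for every agent j ≠ i* q. Let γ̲ = min_{i,q} γ i q > 0 and δ = min_q (f (i* q) q − max_{j ≠ i* q} f j q) > 0. Then every PBRAG trajectory W satisfies W t (i* q) q = 1 for every task q and all t ≥ ⌈1 / (γ̲ * δ)⌉. -/

import Mathlib

open Finset Filter

noncomputable def fsMax (s : Finset ℝ) : ℝ := s.max.unbotD 0

noncomputable def fsMin (s : Finset ℝ) : ℝ := s.min.untopD 0

noncomputable def fsSubmax (s : Finset ℝ) : ℝ := fsMax (s.filter (fun x => x < fsMax s))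

/-- Agent `i` is dominating for task `q`. -/
def Dominating {n m : ℕ} (f : Fin n → Fin m → ℝ) (i : Fin n) (q : Fin m) : Prop :=
  ∀ j, f j q ≤ f i q

/-- Maximum of `g j` over all `j ≠ i` (0 if that set is empty). -/
noncomputable def maxErase {n : ℕ} (i : Fin n) (g : Fin n → ℝ) : ℝ :=
  fsMax ((Finset.univ.erase i).image g)

/-- Utility of agent `i` in the weight game. -/
noncomputable def Uutil {n m : ℕ} (f : Fin n → Fin m → ℝ) (w : Fin n → Fin m → ℝ)
    (i : Fin n) : ℝ :=
  ∑ q, (f i q * w i q - maxErase i (fun j => f j q * w j q) * w i q)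

/-- All entries of the matrix lie in `[0,1]`. -/
def InUnit {n m : ℕ} (w : Fin n → Fin m → ℝ) : Prop :=
  ∀ i q, w i q ∈ Set.Icc (0 : ℝ) 1

/-- Nash equilibrium of the weight game. -/
def IsNashW {n m : ℕ} (f : Fin n → Fin m → ℝ) (w : Fin n → Fin m → ℝ) : Prop :=
  ∀ i, ∀ w' : Fin m → ℝ, (∀ q, w' q ∈ Set.Icc (0 : ℝ) 1) →
    Uutil f (Function.update w i w') i ≤ Uutil f w i

noncomputable def clamp (x : ℝ) : ℝ := max 0 (min x 1)

/-- One step of the projected best-response ascending gradient dynamics. -/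
noncomputable def pbrag {n m : ℕ} (f γ : Fin n → Fin m → ℝ)
    (w : Fin n → Fin m → ℝ) : Fin n → Fin m → ℝ :=
  fun i q => clamp (w i q + γ i q * (f i q - maxErase i (fun j => f j q * w j q)))

lemma le_fsMax' {s : Finset ℝ} {x : ℝ} (hx : x ∈ s) : x ≤ fsMax s := by
  obtain ⟨b, hb⟩ := s.max_of_mem hx
  have h1 := Finset.le_max_of_eq hx hb
  simpa [fsMax, hb]

lemma fsMax_mem' {s : Finset ℝ} (hs : s.Nonempty) : fsMax s ∈ s := by
  obtain ⟨b, hb⟩ := s.max_of_nonempty hs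
  have := Finset.mem_of_max hb
  simpa [fsMax, hb]

lemma fsMin_le' {s : Finset ℝ} {x : ℝ} (hx : x ∈ s) : fsMin s ≤ x := by
  obtain ⟨b, hb⟩ := s.min_of_mem hx
  have h1 := Finset.min_le_of_eq hx hb
  simpa [fsMin, hb]

lemma clamp_mem (x : ℝ) : clamp x ∈ Set.Icc (0:ℝ) 1 := by
  constructor
  · exact le_max_left _ _
  · exact max_le (by norm_num) (min_le_right _ _)

lemma min_one_le_clamp (x : ℝ) : min 1 x ≤ clamp x := by
  rw [min_comm]
  exact le_max_right _ _

lemma le_maxErase {n : ℕ} {i j : Fin n} (h : j ≠ i) (g : Fin n → ℝ) :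
    g j ≤ maxErase i g :=
  le_fsMax' (Finset.mem_image_of_mem g (Finset.mem_erase.2 ⟨h, Finset.mem_univ j⟩))

lemma maxErase_le {n : ℕ} (hn : 2 ≤ n) (i : Fin n) {g g' : Fin n → ℝ}
    (h : ∀ j, g j ≤ g' j) : maxErase i g ≤ maxErase i g' := by
  have hcard : 1 < Fintype.card (Fin n) := by simp; omega
  obtain ⟨j, hj⟩ := Fintype.exists_ne_of_one_lt_card hcard i
  have hne : ((Finset.univ.erase i).image g).Nonempty :=
    ⟨g j, Finset.mem_image_of_mem g (Finset.mem_erase.2 ⟨hj, Finset.mem_univ j⟩)⟩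
  obtain ⟨k, hk, hkeq⟩ := Finset.mem_image.1 (fsMax_mem' hne)
  calc maxErase i g = g k := hkeq.symm
    _ ≤ g' k := h k
    _ ≤ maxErase i g' := le_maxErase (Finset.mem_erase.1 hk).1 g'

theorem pbrag_dominating_reaches_one {n m : ℕ} (hn : 2 ≤ n) (f : Fin n → Fin m → ℝ)
    (hf : ∀ i q, 0 ≤ f i q)
    (istar : Fin m → Fin n)
    (hstar : ∀ q, ∀ j, j ≠ istar q → f j q < f (istar q) q)
    (γ : Fin n → Fin m → ℝ) (hγ : ∀ i q, 0 < γ i q)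
    (γlow : ℝ)
    (hγlow : γlow = fsMin (Finset.univ.image (fun p : Fin n × Fin m => γ p.1 p.2)))
    (hγlowpos : 0 < γlow)
    (δ : ℝ)
    (hδ : δ = fsMin (Finset.univ.image
      (fun q => f (istar q) q - maxErase (istar q) (fun j => f j q))))
    (hδpos : 0 < δ)
    (W : ℕ → Fin n → Fin m → ℝ)
    (hW0 : InUnit (W 0)) (hWs : ∀ t, W (t + 1) = pbrag f γ (W t)) :
    ∀ (q : Fin m) (t : ℕ), ⌈1 / (γlow * δ)⌉ ≤ (t : ℤ) → W t (istar q) q = 1 := by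
  -- All iterates stay in [0,1]
  have hInUnit : ∀ t, InUnit (W t) := by
    intro t
    cases t with
    | zero => exact hW0
    | succ t => intro i q; rw [hWs t]; exact clamp_mem _
  intro q
  set i := istar q with hi
  set c : ℝ := γlow * δ with hc
  have hcpos : 0 < c := mul_pos hγlowpos hδpos
  -- key lower bound by induction
  have key : ∀ t : ℕ, min 1 ((t : ℝ) * c) ≤ W t i q := by
    intro t
    induction t with
    | zero =>
      simp only [Nat.cast_zero, zero_mul]
      have := (hW0 i q).1
      have : min (1:ℝ) 0 ≤ 0 := min_le_right _ _
      exact le_trans this (hW0 i q).1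
    | succ t ih =>
      have hU := hInUnit t
      -- bound on the opponents' term
      have hM : maxErase i (fun j => f j q * W t j q) ≤ maxErase i (fun j => f j q) := by
        apply maxErase_le hn
        intro j
        exact mul_le_of_le_one_right (hf j q) (hU j q).2
      have hδle : δ ≤ f i q - maxErase i (fun j => f j q) := by
        rw [hδ]
        exact fsMin_le' (Finset.mem_image_of_mem _ (Finset.mem_univ q))
      have hγle : γlow ≤ γ i q := by
        rw [hγlow]
        exact fsMin_le' (Finset.mem_image_of_mem _ (Finset.mem_univ (i, q)))
      have hinc : c ≤ γ i q * (f i q - maxErase i (fun j => f j q * W t j q)) := by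
        have h1 : δ ≤ f i q - maxErase i (fun j => f j q * W t j q) := by linarith
        calc c = γlow * δ := hc
          _ ≤ γ i q * δ := by
              apply mul_le_mul_of_nonneg_right hγle hδpos.le
          _ ≤ γ i q * (f i q - maxErase i (fun j => f j q * W t j q)) :=
              mul_le_mul_of_nonneg_left h1 (hγ i q).le
      have hx : min 1 ((t : ℝ) * c) + c ≤
          W t i q + γ i q * (f i q - maxErase i (fun j => f j q * W t j q)) :=
        add_le_add ih hinc
      have hmin : min 1 (((t : ℝ) + 1) * c) ≤ min 1 ((t : ℝ) * c) + c := by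
        have h2 : min 1 ((t : ℝ) * c) + c = min (1 + c) ((t : ℝ) * c + c) := by
          rw [min_add_add_right]
        rw [h2]
        apply le_min
        · exact le_trans (min_le_left _ _) (by linarith)
        · exact min_le_of_right_le (le_of_eq (by ring))
      rw [hWs t]
      have hfinal : min 1 (((t : ℝ) + 1) * c) ≤ pbrag f γ (W t) i q := by
        refine le_trans ?_ (min_one_le_clamp _)
        exact le_min (min_le_left _ _) (le_trans hmin hx)
      simpa using hfinal
  intro t ht
  have ht' : 1 / c ≤ (t : ℝ) := by
    have := Int.ceil_le.mp ht
    exact_mod_cast this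
  have h1 : 1 ≤ (t : ℝ) * c := by
    rw [div_le_iff₀ hcpos] at ht'
    linarith
  have hlow : (1 : ℝ) ≤ W t i q := by
    have := key t
    rw [min_eq_left h1] at this
    exact this
  exact le_antisymm (hInUnit t i q).2 hlow
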